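/- Let 0<s<1<p<∞ be fixed, let Ω⊂ℝⁿ be a bounded open set and let A⊂Ω be measurable with positive measure. If u∈W^{s,p}_A(Ω) is an extremal for λ_s(A), then u has constant sign: either u≥0 a.e. in Ω or u≤0 a.e. in Ω. More precisely, if both |{u>0}|>0 and |{u<0}|>0 then [|u|]_{s,p}^p < [u]_{s,p}^p, contradicting minimality. -/

import Mathlib

open MeasureTheory Filter Topology Set

noncomputable section

abbrev Euc (n : ℕ) := EuclideanSpace ℝ (Fin n)

/-- `p`-th power of the Gagliardo seminorm of `u` on `Ω`. -/
def gagliardo (n : ℕ) (s p : ℝ) (Ω : Set (Euc n)) (u : Euc n → ℝ) : ℝ :=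
  ∫ z in Ω ×ˢ Ω, |u z.1 - u z.2| ^ p / ‖z.1 - z.2‖ ^ ((n : ℝ) + s * p)

/-- `u` belongs to the fractional Sobolev space `W^{s,p}(Ω)`. -/
def inFracSobolev (n : ℕ) (s p : ℝ) (Ω : Set (Euc n)) (u : Euc n → ℝ) : Prop :=
  MemLp u (ENNReal.ofReal p) (volume.restrict Ω) ∧
  IntegrableOn
    (fun z : Euc n × Euc n => |u z.1 - u z.2| ^ p / ‖z.1 - z.2‖ ^ ((n : ℝ) + s * p))
    (Ω ×ˢ Ω) volume

/-- The set of admissible Rayleigh quotients defining the optimal Poincaré constant `λ_s(A)`. -/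
def lambdaSet (n : ℕ) (s p : ℝ) (Ω A : Set (Euc n)) : Set ℝ :=
  { r | ∃ u : Euc n → ℝ, inFracSobolev n s p Ω u ∧ (∀ᵐ x ∂(volume.restrict A), u x = 0) ∧
      0 < ∫ x in Ω, |u x| ^ p ∧ r = (gagliardo n s p Ω u / 2) / ∫ x in Ω, |u x| ^ p }

/-- The optimal Poincaré constant `λ_s(A)`. -/
def lambdaS (n : ℕ) (s p : ℝ) (Ω A : Set (Euc n)) : ℝ := sInf (lambdaSet n s p Ω A)

/-! ### Auxiliary lemmas -/

lemma aux_div_le_div {a b d : ℝ} (h : a ≤ b) (hd : 0 ≤ d) : a / d ≤ b / d := by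
  rcases hd.eq_or_lt with h0 | h0
  · simp [← h0]
  · exact (div_le_div_iff_of_pos_right h0).mpr h

/-- Pointwise comparison of the integrands. -/
lemma aux_ptwise_le {p : ℝ} (hp : 0 < p) (a b : ℝ) (d : ℝ) (hd : 0 ≤ d) :
    (abs (|a| - |b|)) ^ p / d ≤ |a - b| ^ p / d :=
  aux_div_le_div
    (Real.rpow_le_rpow (abs_nonneg _) (abs_abs_sub_abs_le_abs_sub a b) hp.le) hd

/-- Strict pointwise comparison when the signs differ. -/
lemma aux_ptwise_lt {p : ℝ} (hp : 0 < p) {a b : ℝ} (ha : 0 < a) (hb : b < 0)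
    {d : ℝ} (hd : 0 < d) :
    (abs (|a| - |b|)) ^ p / d < |a - b| ^ p / d := by
  have habs : (abs (|a| - |b|)) < |a - b| := by
    have h1 : |a - b| = a - b := abs_of_pos (by linarith)
    rw [h1, abs_of_pos ha]
    have hb' : |b| = -b := abs_of_neg hb
    rw [hb']
    rw [abs_lt]
    constructor <;> linarith
  exact (div_lt_div_iff_of_pos_right hd).mpr
    (Real.rpow_lt_rpow (abs_nonneg _) habs hp)

/-- The gagliardo integrand is nonnegative, hence so is `gagliardo`. -/
lemma gagliardo_nonneg (n : ℕ) (s p : ℝ) (Ω : Set (Euc n)) (u : Euc n → ℝ) :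
    0 ≤ gagliardo n s p Ω u := by
  refine integral_nonneg fun z => ?_
  exact div_nonneg (Real.rpow_nonneg (abs_nonneg _) _) (Real.rpow_nonneg (norm_nonneg _) _)

/-- AE strong measurability of the abs-integrand. -/
lemma aux_aesm (n : ℕ) (s p : ℝ) (Ω : Set (Euc n)) (u : Euc n → ℝ)
    (hm : AEStronglyMeasurable u (volume.restrict Ω)) :
    AEStronglyMeasurable
      (fun z : Euc n × Euc n => (abs (|u z.1| - |u z.2|)) ^ p / ‖z.1 - z.2‖ ^ ((n : ℝ) + s * p))
      (volume.restrict (Ω ×ˢ Ω)) := by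
  have hrw : (volume : Measure (Euc n × Euc n)).restrict (Ω ×ˢ Ω)
      = (volume.restrict Ω).prod (volume.restrict Ω) := by
    rw [Measure.volume_eq_prod, Measure.prod_restrict]
  rw [hrw]
  have h1 : AEMeasurable (fun z : Euc n × Euc n => u z.1)
      ((volume.restrict Ω).prod (volume.restrict Ω)) :=
      hm.aemeasurable.comp_quasiMeasurePreserving Measure.quasiMeasurePreserving_fst
  have h2 : AEMeasurable (fun z : Euc n × Euc n => u z.2)
      ((volume.restrict Ω).prod (volume.restrict Ω)) :=
      hm.aemeasurable.comp_quasiMeasurePreserving Measure.quasiMeasurePreserving_snd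
  have hnum : AEMeasurable
      (fun z : Euc n × Euc n => (abs (|u z.1| - |u z.2|)) ^ p)
      ((volume.restrict Ω).prod (volume.restrict Ω)) :=
    ((measurable_abs.comp_aemeasurable ((measurable_abs.comp_aemeasurable h1).sub (measurable_abs.comp_aemeasurable h2))).pow aemeasurable_const)
  have hden : Measurable
      (fun z : Euc n × Euc n => ‖z.1 - z.2‖ ^ ((n : ℝ) + s * p)) :=
    (measurable_fst.sub measurable_snd).norm.pow measurable_const
  exact (hnum.div hden.aemeasurable).aestronglyMeasurable

/-- Integrability of the abs-integrand, by domination. -/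
lemma aux_int (n : ℕ) (s p : ℝ) (hp : 0 < p) (Ω : Set (Euc n)) (u : Euc n → ℝ)
    (hm : AEStronglyMeasurable u (volume.restrict Ω))
    (hg : IntegrableOn
      (fun z : Euc n × Euc n => |u z.1 - u z.2| ^ p / ‖z.1 - z.2‖ ^ ((n : ℝ) + s * p))
      (Ω ×ˢ Ω) volume) :
    IntegrableOn
      (fun z : Euc n × Euc n => (abs (|u z.1| - |u z.2|)) ^ p / ‖z.1 - z.2‖ ^ ((n : ℝ) + s * p))
      (Ω ×ˢ Ω) volume := by
  refine Integrable.mono hg (aux_aesm n s p Ω u hm) (Eventually.of_forall fun z => ?_)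
  have h1 : (0:ℝ) ≤ (abs (|u z.1| - |u z.2|)) ^ p / ‖z.1 - z.2‖ ^ ((n : ℝ) + s * p) :=
    div_nonneg (Real.rpow_nonneg (abs_nonneg _) _) (Real.rpow_nonneg (norm_nonneg _) _)
  have h2 : (0:ℝ) ≤ |u z.1 - u z.2| ^ p / ‖z.1 - z.2‖ ^ ((n : ℝ) + s * p) :=
    div_nonneg (Real.rpow_nonneg (abs_nonneg _) _) (Real.rpow_nonneg (norm_nonneg _) _)
  rw [Real.norm_eq_abs, Real.norm_eq_abs, abs_of_nonneg h1, abs_of_nonneg h2]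
  exact aux_ptwise_le hp _ _ _ (Real.rpow_nonneg (norm_nonneg _) _)

/-- Key strict inequality. -/
lemma aux_strict (n : ℕ) (s p : ℝ) (hs0 : 0 < s) (hp : 0 < p)
    (Ω : Set (Euc n)) (u : Euc n → ℝ)
    (hm : AEStronglyMeasurable u (volume.restrict Ω))
    (hg : IntegrableOn
      (fun z : Euc n × Euc n => |u z.1 - u z.2| ^ p / ‖z.1 - z.2‖ ^ ((n : ℝ) + s * p))
      (Ω ×ˢ Ω) volume)
    (hP : 0 < volume {x ∈ Ω | 0 < u x}) (hN : 0 < volume {x ∈ Ω | u x < 0}) :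
    gagliardo n s p Ω (fun x => |u x|) < gagliardo n s p Ω u := by
  set α : ℝ := (n : ℝ) + s * p with hα
  set f : Euc n × Euc n → ℝ :=
    fun z => (abs (|u z.1| - |u z.2|)) ^ p / ‖z.1 - z.2‖ ^ α with hf
  set g : Euc n × Euc n → ℝ :=
    fun z => |u z.1 - u z.2| ^ p / ‖z.1 - z.2‖ ^ α with hgdef
  have hfint : IntegrableOn f (Ω ×ˢ Ω) volume := aux_int n s p hp Ω u hm hg
  have hsub : IntegrableOn (fun z => g z - f z) (Ω ×ˢ Ω) volume := hg.sub hfint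
  have hle : ∀ z, 0 ≤ g z - f z := fun z => by
    have := aux_ptwise_le hp (u z.1) (u z.2) (‖z.1 - z.2‖ ^ α)
      (Real.rpow_nonneg (norm_nonneg _) _)
    simpa [hf, hgdef] using sub_nonneg.mpr this
  have hpos : 0 < ∫ z in Ω ×ˢ Ω, (g z - f z) := by
    rw [setIntegral_pos_iff_support_of_nonneg_ae (Eventually.of_forall hle) hsub]
    have hsubset : {x ∈ Ω | 0 < u x} ×ˢ {x ∈ Ω | u x < 0}
        ⊆ Function.support (fun z => g z - f z) ∩ (Ω ×ˢ Ω) := by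
      rintro ⟨x, y⟩ ⟨⟨hxΩ, hx⟩, ⟨hyΩ, hy⟩⟩
      have hxy : x ≠ y := by
        intro h; rw [h] at hx; exact absurd hy (not_lt.mpr hx.le)
      have hd : 0 < ‖x - y‖ ^ α := by
        apply Real.rpow_pos_of_pos
        simpa [sub_eq_zero] using hxy
      have hlt : f (x, y) < g (x, y) := aux_ptwise_lt hp hx hy hd
      refine ⟨?_, ⟨hxΩ, hyΩ⟩⟩
      simp only [Function.mem_support]
      exact ne_of_gt (sub_pos.mpr hlt)
    calc (0 : ENNReal) < volume {x ∈ Ω | 0 < u x} * volume {x ∈ Ω | u x < 0} :=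
          ENNReal.mul_pos hP.ne' hN.ne'
      _ = volume ({x ∈ Ω | 0 < u x} ×ˢ {x ∈ Ω | u x < 0}) := by
          rw [Measure.volume_eq_prod, Measure.prod_prod]
      _ ≤ volume (Function.support (fun z => g z - f z) ∩ (Ω ×ˢ Ω)) :=
          measure_mono hsubset
  have heq : ∫ z in Ω ×ˢ Ω, (g z - f z)
      = (∫ z in Ω ×ˢ Ω, g z) - ∫ z in Ω ×ˢ Ω, f z := integral_sub hg hfint
  have : (∫ z in Ω ×ˢ Ω, f z) < ∫ z in Ω ×ˢ Ω, g z := by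
    rw [heq] at hpos; linarith
  simpa [gagliardo, hf, hgdef] using this

/-- An extremal for `λ_s(A)` has constant sign; more precisely, if `u` changes sign on a
set of positive measure then `[|u|]_{s,p}^p < [u]_{s,p}^p`. -/
theorem extremal_constant_sign
    (n : ℕ) (s p : ℝ) (hs0 : 0 < s) (hs1 : s < 1) (hp : 1 < p)
    (Ω : Set (Euc n)) (hΩo : IsOpen Ω) (hΩb : Bornology.IsBounded Ω)
    (A : Set (Euc n)) (hA : MeasurableSet A) (hAΩ : A ⊆ Ω) (hApos : 0 < volume A)
    (u : Euc n → ℝ) (hu : inFracSobolev n s p Ω u)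
    (huA : ∀ᵐ x ∂(volume.restrict A), u x = 0)
    (hune : 0 < ∫ x in Ω, |u x| ^ p)
    (hext : gagliardo n s p Ω u / 2 = lambdaS n s p Ω A * ∫ x in Ω, |u x| ^ p) :
    ((∀ᵐ x ∂(volume.restrict Ω), 0 ≤ u x) ∨ (∀ᵐ x ∂(volume.restrict Ω), u x ≤ 0)) ∧
    (0 < volume {x ∈ Ω | 0 < u x} → 0 < volume {x ∈ Ω | u x < 0} →
      gagliardo n s p Ω (fun x => |u x|) < gagliardo n s p Ω u) := by
  have hp0 : (0:ℝ) < p := lt_trans one_pos hp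
  have hm : AEStronglyMeasurable u (volume.restrict Ω) := hu.1.aestronglyMeasurable
  have part2 : 0 < volume {x ∈ Ω | 0 < u x} → 0 < volume {x ∈ Ω | u x < 0} →
      gagliardo n s p Ω (fun x => |u x|) < gagliardo n s p Ω u :=
    fun hP hN => aux_strict n s p hs0 hp0 Ω u hm hu.2 hP hN
  refine ⟨?_, part2⟩
  by_contra hcon
  push_neg at hcon
  obtain ⟨h1, h2⟩ := hcon
  -- both sign sets have positive measure
  have hN : 0 < volume {x ∈ Ω | u x < 0} := by
    replace h1 : ¬ ∀ᵐ x ∂(volume.restrict Ω), 0 ≤ u x :=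
      Filter.not_eventually.mpr (h1.mono fun x hx => not_le.mpr hx)
    rw [ae_iff] at h1
    have : volume.restrict Ω {x | ¬ 0 ≤ u x} ≠ 0 := h1
    rw [Measure.restrict_apply' hΩo.measurableSet] at this
    have hset : {x | ¬ 0 ≤ u x} ∩ Ω = {x ∈ Ω | u x < 0} := by
      ext x; simp [not_le, and_comm]
    rw [hset] at this
    exact pos_iff_ne_zero.mpr this
  have hP : 0 < volume {x ∈ Ω | 0 < u x} := by
    replace h2 : ¬ ∀ᵐ x ∂(volume.restrict Ω), u x ≤ 0 :=
      Filter.not_eventually.mpr (h2.mono fun x hx => not_le.mpr hx)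
    rw [ae_iff] at h2
    have : volume.restrict Ω {x | ¬ u x ≤ 0} ≠ 0 := h2
    rw [Measure.restrict_apply' hΩo.measurableSet] at this
    have hset : {x | ¬ u x ≤ 0} ∩ Ω = {x ∈ Ω | 0 < u x} := by
      ext x; simp [not_le, and_comm]
    rw [hset] at this
    exact pos_iff_ne_zero.mpr this
  have hlt := part2 hP hN
  -- |u| is admissible
  set I : ℝ := ∫ x in Ω, |u x| ^ p with hI
  have hIabs : (∫ x in Ω, (abs (abs (u x))) ^ p) = I := by
    simp [hI, abs_abs]
  have habs_sob : inFracSobolev n s p Ω (fun x => |u x|) := by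
    constructor
    · have := hu.1.norm
      simpa [Real.norm_eq_abs] using this
    · exact aux_int n s p hp0 Ω u hm hu.2
  have habsA : ∀ᵐ x ∂(volume.restrict A), |u x| = 0 := by
    filter_upwards [huA] with x hx; simp [hx]
  have hmem : (gagliardo n s p Ω (fun x => |u x|) / 2) / I ∈ lambdaSet n s p Ω A := by
    refine ⟨fun x => |u x|, habs_sob, habsA, ?_, ?_⟩
    · rw [hIabs]; exact hune
    · rw [hIabs]
  have hbdd : BddBelow (lambdaSet n s p Ω A) := by
    refine ⟨0, fun r hr => ?_⟩
    obtain ⟨v, hv, _, hvpos, hreq⟩ := hr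
    rw [hreq]
    exact div_nonneg (div_nonneg (gagliardo_nonneg n s p Ω v) (by norm_num)) hvpos.le
  have hle : lambdaS n s p Ω A ≤ (gagliardo n s p Ω (fun x => |u x|) / 2) / I :=
    csInf_le hbdd hmem
  have hval : lambdaS n s p Ω A = (gagliardo n s p Ω u / 2) / I := by
    field_simp [hune.ne'] at hext ⊢
    linarith [hext]
  have hstrict : (gagliardo n s p Ω (fun x => |u x|) / 2) / I
      < (gagliardo n s p Ω u / 2) / I := by
    apply (div_lt_div_iff_of_pos_right hune).mpr
    linarith
  rw [← hval] at hstrict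
  exact absurd (lt_of_le_of_lt hle hstrict) (lt_irrefl _)
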